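/- Let G = (V, E, w) be a finite weighted directed graph with integer weights in which every cycle has strictly negative weight. Then for every infinite path (v₀, v₁, v₂, …) in G, the weights of its prefixes are not bounded from below; that is, for every M ∈ ℤ there exists n ∈ ℕ such that Σ_{i=0}^{n-1} w(v_i, v_{i+1}) < M. -/

import Mathlib

/-- if every cycle of a finite graph has strictly negative weight,
then the prefix sums of every infinite path are unbounded from below. -/
theorem stmt_4 {V : Type*} [Fintype V] (E : V → V → Prop) (w : V → V → ℤ)
    (hneg : ∀ (k : ℕ) (u : ℕ → V), 1 ≤ k → (∀ i < k, E (u i) (u (i + 1))) →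
      u k = u 0 → ∑ i ∈ Finset.range k, w (u i) (u (i + 1)) < 0)
    (p : ℕ → V) (hp : ∀ i, E (p i) (p (i + 1))) (M : ℤ) :
    ∃ n : ℕ, ∑ i ∈ Finset.range n, w (p i) (p (i + 1)) < M := by
  set S : ℕ → ℤ := fun n => ∑ i ∈ Finset.range n, w (p i) (p (i + 1)) with hS
  -- key: if p n = p m with n < m, then S m < S n
  have key : ∀ n m : ℕ, n < m → p n = p m → S m < S n := by
    intro n m hnm hpe
    have hcyc := hneg (m - n) (fun i => p (n + i)) (by omega)
      (fun i hi => by simpa [Nat.add_assoc] using hp (n + i))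
      (by beta_reduce; rw [Nat.add_sub_cancel' (le_of_lt hnm)]; simp [hpe])
    beta_reduce at hcyc
    have hsplit : S m = S n + ∑ i ∈ Finset.range (m - n), w (p (n + i)) (p (n + i + 1)) := by
      rw [hS]; simp only
      rw [show m = n + (m - n) by omega, Finset.sum_range_add]; simp [Nat.add_sub_cancel_left]
    have heq : ∑ i ∈ Finset.range (m - n), w (p (n + i)) (p (n + (i + 1)))
        = ∑ i ∈ Finset.range (m - n), w (p (n + i)) (p (n + i + 1)) := by
      refine Finset.sum_congr rfl fun i _ => by rw [Nat.add_assoc]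
    rw [heq] at hcyc
    omega
  -- some vertex occurs infinitely often
  obtain ⟨v, hv⟩ := Finite.exists_infinite_fiber p
  have hv' : (p ⁻¹' {v}).Infinite := Set.infinite_coe_iff.mp hv
  obtain ⟨n₀, hn₀⟩ := hv'.nonempty
  have step : ∀ k : ℕ, ∃ n, p n = v ∧ S n ≤ S n₀ - k := by
    intro k
    induction k with
    | zero => exact ⟨n₀, hn₀, by simp⟩
    | succ k ih =>
      obtain ⟨n, hn, hSn⟩ := ih
      obtain ⟨m, hm, hnm⟩ := hv'.exists_gt n
      have : S m < S n := key n m hnm (hn.trans hm.symm)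
      refine ⟨m, hm, ?_⟩
      push_cast
      omega
  obtain ⟨n, _, hSn⟩ := step (S n₀ - M + 1).toNat
  refine ⟨n, ?_⟩
  have h1 := Int.self_le_toNat (S n₀ - M + 1)
  show S n < M
  omega
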